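/- Let N be a finite-index subgroup of ℤⁿ such that every coset of N in ℤⁿ contains a vector of ℓ¹-norm at most k, and let (x₁,…,xₙ) be a minimal generating tuple of N. Then ‖xᵢ‖ ≤ Dₙ·(2k + √n) for every i, where ‖·‖ is the Euclidean norm. -/

import Mathlib

/-- The constants `Dₙ`, defined recursively by `D₁ = 1` and
`Dₙ = D_{n−1}² · (4·n²·D_{n−1}³)ⁿ`. -/
noncomputable def Dc : ℕ → ℝ
  | 0 => 1
  | 1 => 1
  | (n + 2) => (Dc (n + 1)) ^ 2 * (4 * ((n + 2 : ℕ) : ℝ) ^ 2 * (Dc (n + 1)) ^ 3) ^ (n + 2)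

/-- The canonical embedding of `ℤⁿ` into Euclidean space `ℝⁿ`. -/
def toR {n : ℕ} (x : Fin n → ℤ) : EuclideanSpace ℝ (Fin n) := WithLp.toLp 2 (fun i => (x i : ℝ))

/-- `N ∩ Span_ℝ S = ⟨S⟩`: the elements of `N` lying in the real span of `S`
are exactly the subgroup generated by `S`. -/
def SpanCond {n : ℕ} (N : AddSubgroup (Fin n → ℤ)) (S : Set (Fin n → ℤ)) : Prop :=
  {y : Fin n → ℤ | y ∈ N ∧ toR y ∈ Submodule.span ℝ (toR '' S)} =
    (AddSubgroup.closure S : Set (Fin n → ℤ))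

/-- `(x₁,…,xₙ)` is a minimal generating tuple of `N ≤ ℤⁿ`: each `xᵢ` lies in `N` outside the
subgroup generated by the previous ones, satisfies `N ∩ Span_ℝ{x₁,…,xᵢ} = ⟨x₁,…,xᵢ⟩`, and has
minimal Euclidean norm among all such candidates. -/
def IsMinGenTuple {n : ℕ} (N : AddSubgroup (Fin n → ℤ)) (x : Fin n → (Fin n → ℤ)) : Prop :=
  ∀ i : Fin n,
    x i ∈ N ∧
    x i ∉ AddSubgroup.closure (x '' {j | j < i}) ∧
    SpanCond N (x '' {j | j ≤ i}) ∧
    ∀ y ∈ N, y ∉ AddSubgroup.closure (x '' {j | j < i}) →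
      SpanCond N (insert y (x '' {j | j < i})) → ‖toR (x i)‖ ≤ ‖toR y‖

lemma toR_add {n : ℕ} (a b : Fin n → ℤ) : toR (a + b) = toR a + toR b := by
  ext i; simp [toR]

lemma toR_sub {n : ℕ} (a b : Fin n → ℤ) : toR (a - b) = toR a - toR b := by
  ext i; simp [toR]

lemma toR_zsmul {n : ℕ} (c : ℤ) (a : Fin n → ℤ) : toR (c • a) = (c : ℝ) • toR a := by
  ext i; simp [toR]

lemma toR_zero {n : ℕ} : toR (0 : Fin n → ℤ) = 0 := by
  ext i; simp [toR]

lemma toR_inj {n : ℕ} {a b : Fin n → ℤ} (h : toR a = toR b) : a = b := by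
  funext i
  have : ((a i : ℝ)) = (b i : ℝ) := congrFun (congrArg WithLp.ofLp h) i
  exact_mod_cast this

lemma coord_le_norm {n : ℕ} (v : Fin n → ℤ) (i : Fin n) : |(v i : ℝ)| ≤ ‖toR v‖ := by
  have h2 : ((v i : ℝ))^2 ≤ ∑ j, ((v j : ℝ))^2 :=
    Finset.single_le_sum (f := fun j => ((v j : ℝ))^2) (fun j _ => sq_nonneg _) (Finset.mem_univ i)
  calc |(v i : ℝ)| = Real.sqrt (((v i : ℝ))^2) := (Real.sqrt_sq_eq_abs _).symm
    _ ≤ Real.sqrt (∑ j, ((v j : ℝ))^2) := Real.sqrt_le_sqrt h2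
    _ = ‖toR v‖ := by rw [EuclideanSpace.norm_eq]; simp [toR]

lemma finite_ball {n : ℕ} (C : ℝ) : {v : Fin n → ℤ | ‖toR v‖ ≤ C}.Finite := by
  apply Set.Finite.subset (Set.finite_Icc (fun _ : Fin n => -⌈C⌉) (fun _ => ⌈C⌉))
  intro v hv
  simp only [Set.mem_setOf_eq] at hv
  have hcoord : ∀ i, |(v i : ℝ)| ≤ C := fun i => (coord_le_norm v i).trans hv
  constructor <;> intro i
  · have := (abs_le.1 (hcoord i)).1
    have : (-⌈C⌉ : ℝ) ≤ (v i : ℝ) := le_trans (by push_cast; linarith [Int.le_ceil C]) this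
    exact_mod_cast this
  · have := (abs_le.1 (hcoord i)).2
    have : (v i : ℝ) ≤ (⌈C⌉ : ℝ) := le_trans this (Int.le_ceil C)
    exact_mod_cast this

lemma norm_toR_le_sum_abs {n : ℕ} (z : Fin n → ℤ) : ‖toR z‖ ≤ ((∑ i, |z i| : ℤ) : ℝ) := by
  rw [EuclideanSpace.norm_eq]
  have h : ∑ i, ‖toR z i‖^2 ≤ ((∑ i, |z i| : ℤ) : ℝ)^2 := by
    push_cast
    calc ∑ i, ‖(z i : ℝ)‖^2 = ∑ i, |(z i : ℝ)|^2 := by simp [Real.norm_eq_abs]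
      _ ≤ (∑ i, |(z i : ℝ)|)^2 := Finset.sum_sq_le_sq_sum_of_nonneg (fun i _ => abs_nonneg _)
  calc Real.sqrt (∑ i, ‖toR z i‖^2) ≤ Real.sqrt (((∑ i, |z i| : ℤ) : ℝ)^2) := Real.sqrt_le_sqrt h
    _ = |((∑ i, |z i| : ℤ) : ℝ)| := Real.sqrt_sq_eq_abs _
    _ = ((∑ i, |z i| : ℤ) : ℝ) := abs_of_nonneg (by positivity)


noncomputable def toRHom (n : ℕ) : (Fin n → ℤ) →+ EuclideanSpace ℝ (Fin n) :=
  { toFun := toR, map_zero' := toR_zero, map_add' := toR_add }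

lemma reduce {n : ℕ} (s : Finset (Fin n → ℤ)) (p : EuclideanSpace ℝ (Fin n))
    (hp : p ∈ Submodule.span ℝ (toR '' (s : Set (Fin n → ℤ)))) :
    ∃ g : Fin n → ℤ, g ∈ AddSubgroup.closure (s : Set (Fin n → ℤ)) ∧
      ‖p - toR g‖ ≤ (1/2) * ∑ v ∈ s, ‖toR v‖ := by
  have himg : toR '' (s : Set (Fin n → ℤ)) = Set.range (fun v : {v // v ∈ s} => toR v.1) := by
    ext q; simp [Set.mem_image, Set.mem_range]
  rw [himg, Submodule.mem_span_range_iff_exists_fun] at hp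
  obtain ⟨c, hc⟩ := hp
  refine ⟨∑ v : {v // v ∈ s}, round (c v) • v.1, ?_, ?_⟩
  · apply AddSubgroup.sum_mem
    intro v _
    exact AddSubgroup.zsmul_mem _ (AddSubgroup.subset_closure v.2) _
  · have htoR : toR (∑ v : {v // v ∈ s}, round (c v) • v.1)
        = ∑ v : {v // v ∈ s}, ((round (c v) : ℝ)) • toR v.1 := by
      rw [show toR (∑ v : {v // v ∈ s}, round (c v) • v.1)
          = toRHom n (∑ v : {v // v ∈ s}, round (c v) • v.1) from rfl, map_sum]
      exact Finset.sum_congr rfl (fun v _ => toR_zsmul _ _)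
    rw [htoR, ← hc, ← Finset.sum_sub_distrib]
    have : ∀ v : {v // v ∈ s}, c v • toR v.1 - (round (c v) : ℝ) • toR v.1
        = (c v - round (c v)) • toR v.1 := by intro v; rw [sub_smul]
    simp_rw [this]
    calc ‖∑ v : {v // v ∈ s}, (c v - round (c v)) • toR v.1‖
        ≤ ∑ v : {v // v ∈ s}, ‖(c v - round (c v)) • toR v.1‖ := norm_sum_le _ _
      _ ≤ ∑ v : {v // v ∈ s}, (1/2) * ‖toR v.1‖ := by
          apply Finset.sum_le_sum
          intro v _
          rw [norm_smul, Real.norm_eq_abs]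
          exact mul_le_mul_of_nonneg_right (abs_sub_round _) (norm_nonneg _)
      _ = (1/2) * ∑ v ∈ s, ‖toR v‖ := by
          rw [← Finset.mul_sum]
          congr 1
          exact (Finset.sum_coe_sort s (fun v => ‖toR v‖))


/-- the preimage of a real subspace under toR, as an additive subgroup. -/
def preimV {n : ℕ} (W : Submodule ℝ (EuclideanSpace ℝ (Fin n))) : AddSubgroup (Fin n → ℤ) where
  carrier := {v | toR v ∈ W}
  zero_mem' := by simp [toR_zero]
  add_mem' {a b} ha hb := by simp only [Set.mem_setOf_eq, toR_add] at *; exact W.add_mem ha hb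
  neg_mem' {a} ha := by
    simp only [Set.mem_setOf_eq] at *
    have : toR (-a) = -toR a := by
      have := toR_sub (0 : Fin n → ℤ) a; simpa [toR_zero] using this
    rw [this]; exact W.neg_mem ha

lemma mem_preimV {n : ℕ} {W : Submodule ℝ (EuclideanSpace ℝ (Fin n))} {v : Fin n → ℤ} :
    v ∈ preimV W ↔ toR v ∈ W := Iff.rfl

lemma saturation {n : ℕ} (N : AddSubgroup (Fin n → ℤ)) (s : Finset (Fin n → ℤ))
    (hsN : (s : Set (Fin n → ℤ)) ⊆ N)
    (hprev : {v : Fin n → ℤ | v ∈ N ∧ toR v ∈ Submodule.span ℝ (toR '' (s : Set (Fin n → ℤ)))}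
      = (AddSubgroup.closure (s : Set (Fin n → ℤ)) : Set (Fin n → ℤ)))
    (w : Fin n → ℤ) (hwN : w ∈ N)
    (hw : toR w ∉ Submodule.span ℝ (toR '' (s : Set (Fin n → ℤ)))) :
    ∃ y : Fin n → ℤ, y ∈ N ∧ y ∉ AddSubgroup.closure (s : Set (Fin n → ℤ)) ∧
      SpanCond N (insert y (s : Set (Fin n → ℤ))) ∧
      ‖toR y‖ ≤ ‖toR w‖ + (1/2) * ∑ v ∈ s, ‖toR v‖ := by
  classical
  set V : Submodule ℝ (EuclideanSpace ℝ (Fin n)) :=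
    Submodule.span ℝ (toR '' (s : Set (Fin n → ℤ))) with hV
  haveI : FiniteDimensional ℝ V :=
    FiniteDimensional.span_of_finite ℝ ((s : Set (Fin n → ℤ)).toFinite.image toR)
  set u : EuclideanSpace ℝ (Fin n) := toR w - (Submodule.orthogonalProjectionOnto V (toR w) : _) with hu
  have hu_orth : u ∈ Vᗮ := Submodule.sub_starProjection_mem_orthogonal (K := V) (toR w)
  have hfV : ∀ p ∈ V, (inner ℝ u p : ℝ) = 0 := by
    intro p hp
    rw [real_inner_comm]
    exact (Submodule.mem_orthogonal V u).1 hu_orth p hp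
  have hu_ne : u ≠ 0 := by
    intro h
    apply hw
    have : toR w = (Submodule.orthogonalProjectionOnto V (toR w) : EuclideanSpace ℝ (Fin n)) := by
      have := sub_eq_zero.1 (hu ▸ h : toR w - _ = 0); exact this
    rw [this]; exact (Submodule.orthogonalProjectionOnto V (toR w)).2
  have hu_pos : (0:ℝ) < ‖u‖ ^ 2 := by
    have := norm_pos_iff.2 hu_ne
    positivity
  have hfw : (inner ℝ u (toR w) : ℝ) = ‖u‖ ^ 2 := by
    have : toR w = u + (Submodule.orthogonalProjectionOnto V (toR w) : EuclideanSpace ℝ (Fin n)) := by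
      rw [hu]; abel
    rw [this, inner_add_right, hfV _ (Submodule.orthogonalProjectionOnto V (toR w)).2,
      real_inner_self_eq_norm_sq, add_zero]
  have hu_le : ‖u‖ ≤ ‖toR w‖ := by
    have h1 : ‖u‖ ^ 2 ≤ ‖u‖ * ‖toR w‖ := by
      rw [← hfw]; exact real_inner_le_norm u (toR w)
    nlinarith [norm_nonneg u, norm_nonneg (toR w)]
  set W : Submodule ℝ (EuclideanSpace ℝ (Fin n)) :=
    Submodule.span ℝ (insert (toR w) (toR '' (s : Set (Fin n → ℤ)))) with hW
  have hVW : V ≤ W := Submodule.span_mono (Set.subset_insert _ _)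
  have hwW : toR w ∈ W := Submodule.subset_span (Set.mem_insert _ _)
  -- decomposition
  have hdecomp : ∀ q ∈ W, q - ((inner ℝ u q : ℝ) / ‖u‖ ^ 2) • u ∈ V := by
    intro q hq
    rw [hW, Submodule.mem_span_insert] at hq
    obtain ⟨t, z, hz, rfl⟩ := hq
    have hfq : (inner ℝ u (t • toR w + z) : ℝ) = t * ‖u‖ ^ 2 := by
      rw [inner_add_right, real_inner_smul_right, hfw, hfV z hz, add_zero]
    rw [hfq]
    have ht : t * ‖u‖ ^ 2 / ‖u‖ ^ 2 = t := by field_simp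
    rw [ht]
    have : t • toR w + z - t • u = t • ((Submodule.orthogonalProjectionOnto V (toR w) : EuclideanSpace ℝ (Fin n))) + z := by
      rw [hu]; module
    rw [this]
    exact V.add_mem (V.smul_mem _ (Submodule.orthogonalProjectionOnto V (toR w)).2) hz
  set C0 : ℝ := ‖toR w‖ + (1/2) * ∑ v ∈ s, ‖toR v‖ with hC0
  have hsum_nonneg : 0 ≤ ∑ v ∈ s, ‖toR v‖ := Finset.sum_nonneg (fun v _ => norm_nonneg _)
  have hclos_sub : (AddSubgroup.closure (s : Set (Fin n → ℤ))) ≤ N ⊓ preimV V := by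
    rw [AddSubgroup.closure_le]
    intro v hv
    exact ⟨hsN hv, Submodule.subset_span (Set.mem_image_of_mem _ hv)⟩
  have hnu : (0:ℝ) < ‖u‖ := norm_pos_iff.2 hu_ne
  have hrep : ∀ r : Fin n → ℤ, r ∈ N → toR r ∈ W →
      ∃ r' : Fin n → ℤ, r' ∈ N ∧ toR r' ∈ W ∧
        (inner ℝ u (toR r') : ℝ) = inner ℝ u (toR r) ∧
        r - r' ∈ AddSubgroup.closure (s : Set (Fin n → ℤ)) ∧
        ‖toR r'‖ ≤ (1/2) * ∑ v ∈ s, ‖toR v‖ + |(inner ℝ u (toR r) : ℝ)| / ‖u‖ := by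
    intro r hrN hrW
    obtain ⟨g, hg_mem, hg_norm⟩ := reduce s _ (hdecomp (toR r) hrW)
    have hgV : toR g ∈ V := (hclos_sub hg_mem).2
    refine ⟨r - g, N.sub_mem hrN ((hclos_sub hg_mem).1), ?_, ?_, ?_, ?_⟩
    · rw [toR_sub]; exact W.sub_mem hrW (hVW hgV)
    · rw [toR_sub, inner_sub_right, hfV _ hgV, sub_zero]
    · simpa [sub_sub_cancel] using hg_mem
    · have hsplit : toR (r - g)
          = (toR r - ((inner ℝ u (toR r) : ℝ) / ‖u‖ ^ 2) • u - toR g)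
            + ((inner ℝ u (toR r) : ℝ) / ‖u‖ ^ 2) • u := by
        rw [toR_sub]; abel
      have hsmul : ‖((inner ℝ u (toR r) : ℝ) / ‖u‖ ^ 2) • u‖
          = |(inner ℝ u (toR r) : ℝ)| / ‖u‖ := by
        rw [norm_smul, Real.norm_eq_abs, abs_div, abs_of_nonneg (sq_nonneg ‖u‖)]
        field_simp
      calc ‖toR (r - g)‖
          ≤ ‖toR r - ((inner ℝ u (toR r) : ℝ) / ‖u‖ ^ 2) • u - toR g‖
            + ‖((inner ℝ u (toR r) : ℝ) / ‖u‖ ^ 2) • u‖ := by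
            rw [hsplit]; exact norm_add_le _ _
        _ ≤ (1/2) * ∑ v ∈ s, ‖toR v‖ + |(inner ℝ u (toR r) : ℝ)| / ‖u‖ := by
            rw [hsmul]; exact add_le_add_left hg_norm _
  set S : Set (Fin n → ℤ) := {v | v ∈ N ∧ toR v ∈ W ∧ 0 < (inner ℝ u (toR v) : ℝ)
    ∧ (inner ℝ u (toR v) : ℝ) ≤ ‖u‖ ^ 2 ∧ ‖toR v‖ ≤ C0} with hS
  have hSfin : S.Finite := (finite_ball C0).subset (fun v hv => hv.2.2.2.2)
  have hwS : w ∈ S := ⟨hwN, hwW, by rw [hfw]; exact hu_pos, le_of_eq hfw, by rw [hC0]; linarith⟩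
  obtain ⟨y, hyS, hymin⟩ := hSfin.toFinset.exists_min_image
    (fun v => (inner ℝ u (toR v) : ℝ)) ⟨w, hSfin.mem_toFinset.2 hwS⟩
  rw [Set.Finite.mem_toFinset] at hyS
  have hymin' : ∀ v ∈ S, (inner ℝ u (toR y) : ℝ) ≤ inner ℝ u (toR v) :=
    fun v hv => hymin v (hSfin.mem_toFinset.2 hv)
  have hα_pos : (0:ℝ) < inner ℝ u (toR y) := hyS.2.2.1
  have hα_le : (inner ℝ u (toR y) : ℝ) ≤ ‖u‖ ^ 2 := hyS.2.2.2.1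
  obtain ⟨y', hy'N, hy'W, hy'f, hy'sub, hy'norm⟩ := hrep y hyS.1 hyS.2.1
  have hdive : |(inner ℝ u (toR y) : ℝ)| / ‖u‖ ≤ ‖u‖ := by
    rw [abs_of_pos hα_pos, div_le_iff₀ hnu]
    calc (inner ℝ u (toR y) : ℝ) ≤ ‖u‖ ^ 2 := hα_le
      _ = ‖u‖ * ‖u‖ := sq ‖u‖ ▸ (sq ‖u‖).symm ▸ by ring
  have hy'C0 : ‖toR y'‖ ≤ C0 := by
    rw [hC0]
    have := hy'norm
    have h2 : |(inner ℝ u (toR y) : ℝ)| / ‖u‖ ≤ ‖toR w‖ := hdive.trans hu_le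
    linarith
  have hy'S : y' ∈ S := ⟨hy'N, hy'W, by rw [hy'f]; exact hα_pos, by rw [hy'f]; exact hα_le, hy'C0⟩
  -- divisibility
  have hdiv : ∀ v : Fin n → ℤ, v ∈ N → toR v ∈ W →
      ∃ c : ℤ, v - c • y' ∈ AddSubgroup.closure (s : Set (Fin n → ℤ)) := by
    intro v hvN hvW
    refine ⟨⌊(inner ℝ u (toR v) : ℝ) / (inner ℝ u (toR y) : ℝ)⌋, ?_⟩
    set c : ℤ := ⌊(inner ℝ u (toR v) : ℝ) / (inner ℝ u (toR y) : ℝ)⌋ with hc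
    set r := v - c • y' with hr
    have hrN : r ∈ N := N.sub_mem hvN (AddSubgroup.zsmul_mem N hy'N c)
    have hrW : toR r ∈ W := by
      rw [hr, toR_sub, toR_zsmul]
      exact W.sub_mem hvW (W.smul_mem _ hy'W)
    have hfr : (inner ℝ u (toR r) : ℝ) = inner ℝ u (toR v) - c * inner ℝ u (toR y) := by
      rw [hr, toR_sub, toR_zsmul, inner_sub_right, real_inner_smul_right, hy'f]
    have hfloor1 : (c:ℝ) * inner ℝ u (toR y) ≤ inner ℝ u (toR v) := by
      have h1 : (c:ℝ) ≤ (inner ℝ u (toR v) : ℝ) / (inner ℝ u (toR y) : ℝ) := Int.floor_le _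
      have := mul_le_mul_of_nonneg_right h1 hα_pos.le
      rwa [div_mul_cancel₀ _ (ne_of_gt hα_pos)] at this
    have hfloor2 : (inner ℝ u (toR v) : ℝ) < (c + 1) * inner ℝ u (toR y) := by
      have h1 : (inner ℝ u (toR v) : ℝ) / (inner ℝ u (toR y) : ℝ) < c + 1 := Int.lt_floor_add_one _
      have := mul_lt_mul_of_pos_right h1 hα_pos
      rwa [div_mul_cancel₀ _ (ne_of_gt hα_pos)] at this
    have hfr_nonneg : 0 ≤ (inner ℝ u (toR r) : ℝ) := by rw [hfr]; linarith
    have hfr_lt : (inner ℝ u (toR r) : ℝ) < inner ℝ u (toR y) := by rw [hfr]; nlinarith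
    rcases eq_or_lt_of_le hfr_nonneg with h0 | hpos
    · have hrV : toR r ∈ V := by
        have := hdecomp (toR r) hrW
        rw [← h0] at this
        simpa using this
      have : r ∈ {v : Fin n → ℤ | v ∈ N ∧ toR v ∈ V} := ⟨hrN, hrV⟩
      rw [hprev] at this
      exact this
    · exfalso
      obtain ⟨r', hr'N, hr'W, hr'f, _, hr'norm⟩ := hrep r hrN hrW
      have habs : |(inner ℝ u (toR r) : ℝ)| / ‖u‖ ≤ ‖u‖ := by
        rw [abs_of_pos hpos, div_le_iff₀ hnu]
        nlinarith
      have hr'S : r' ∈ S := by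
        refine ⟨hr'N, hr'W, by rw [hr'f]; exact hpos, by rw [hr'f]; nlinarith, ?_⟩
        rw [hC0]
        have h2 := habs.trans hu_le
        linarith
      have := hymin' r' hr'S
      rw [hr'f] at this
      linarith
  refine ⟨y', hy'N, ?_, ?_, ?_⟩
  · intro hmem
    have h1 : toR y' ∈ V := (hclos_sub hmem).2
    have h2 := hfV _ h1
    rw [hy'f] at h2
    linarith
  · apply Set.Subset.antisymm
    · rintro v ⟨hvN, hvSpan⟩
      have hvW : toR v ∈ W := by
        have hle : Submodule.span ℝ (toR '' (insert y' (s : Set (Fin n → ℤ)))) ≤ W := by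
          rw [Set.image_insert_eq]
          apply Submodule.span_le.2
          rintro q (rfl | hq)
          · exact hy'W
          · exact hVW (Submodule.subset_span hq)
        exact hle hvSpan
      obtain ⟨c, hcmem⟩ := hdiv v hvN hvW
      have h1 : y' ∈ AddSubgroup.closure (insert y' (s : Set (Fin n → ℤ))) :=
        AddSubgroup.subset_closure (Set.mem_insert _ _)
      have h2 : v - c • y' ∈ AddSubgroup.closure (insert y' (s : Set (Fin n → ℤ))) :=
        AddSubgroup.closure_mono (Set.subset_insert _ _) hcmem
      have hv_eq : v = c • y' + (v - c • y') := by abel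
      show v ∈ AddSubgroup.closure (insert y' (s : Set (Fin n → ℤ)))
      rw [hv_eq]
      exact AddSubgroup.add_mem _ (AddSubgroup.zsmul_mem _ h1 c) h2
    · have hle : AddSubgroup.closure (insert y' (s : Set (Fin n → ℤ)))
          ≤ N ⊓ preimV (Submodule.span ℝ (toR '' (insert y' (s : Set (Fin n → ℤ))))) := by
        rw [AddSubgroup.closure_le]
        rintro v (rfl | hv)
        · exact ⟨hy'N, Submodule.subset_span (Set.mem_image_of_mem _ (Set.mem_insert _ _))⟩
        · exact ⟨hsN hv, Submodule.subset_span (Set.mem_image_of_mem _ (Set.mem_insert_of_mem _ hv))⟩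
      intro v hv
      exact hle hv
  · have h2 : |(inner ℝ u (toR y) : ℝ)| / ‖u‖ ≤ ‖toR w‖ := hdive.trans hu_le
    calc ‖toR y'‖ ≤ (1/2) * ∑ v ∈ s, ‖toR v‖ + |(inner ℝ u (toR y) : ℝ)| / ‖u‖ := hy'norm
      _ ≤ ‖toR w‖ + (1/2) * ∑ v ∈ s, ‖toR v‖ := by linarith


lemma candidate_gen {n : ℕ} (hn : 0 < n) (N : AddSubgroup (Fin n → ℤ)) (k : ℝ) (hk : 0 ≤ k)
    (hdiam : ∀ y : Fin n → ℤ, ∃ z : Fin n → ℤ, y - z ∈ N ∧ ((∑ i, |z i| : ℤ) : ℝ) ≤ k)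
    (V : Submodule ℝ (EuclideanSpace ℝ (Fin n))) (hV : V ≠ ⊤) [FiniteDimensional ℝ V] :
    ∃ w : Fin n → ℤ, w ∈ N ∧ toR w ∉ V ∧ ‖toR w‖ ≤ 2 * k + (3/2) * Real.sqrt n := by
  have hVbot : Vᗮ ≠ ⊥ := fun h => hV (Submodule.orthogonal_eq_bot_iff.1 h)
  obtain ⟨u0, hu0V, hu0⟩ := Submodule.exists_mem_ne_zero_of_ne_bot hVbot
  set u : EuclideanSpace ℝ (Fin n) := (‖u0‖⁻¹ : ℝ) • u0 with hu
  have hu_norm : ‖u‖ = 1 := norm_smul_inv_norm hu0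
  have huV : u ∈ Vᗮ := Vᗮ.smul_mem _ hu0V
  set R : ℝ := k + Real.sqrt n with hR
  have hsqrt : 0 < Real.sqrt n := Real.sqrt_pos.2 (by exact_mod_cast hn)
  set y0 : Fin n → ℤ := fun j => round (R * u j) with hy0
  obtain ⟨z, hz1, hz2⟩ := hdiam y0
  have hz_norm : ‖toR z‖ ≤ k := (norm_toR_le_sum_abs z).trans hz2
  set w : Fin n → ℤ := y0 - z with hw
  have hround : ‖toR y0 - R • u‖ ≤ Real.sqrt n / 2 := by
    rw [EuclideanSpace.norm_eq]
    have hcoord : ∀ j, ‖(toR y0 - R • u) j‖ ^ 2 ≤ (1/2) ^ 2 := by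
      intro j
      have h1 : (toR y0 - R • u) j = (round (R * u j) : ℝ) - R * u j := by
        simp [toR, hy0]
      rw [h1, Real.norm_eq_abs]
      have h2 : |(round (R * u j) : ℝ) - R * u j| ≤ 1/2 := by
        rw [abs_sub_comm]; exact abs_sub_round _
      exact pow_le_pow_left₀ (abs_nonneg _) h2 2
    calc Real.sqrt (∑ j, ‖(toR y0 - R • u) j‖ ^ 2)
        ≤ Real.sqrt (∑ _j : Fin n, (1/2:ℝ) ^ 2) :=
          Real.sqrt_le_sqrt (Finset.sum_le_sum (fun j _ => hcoord j))
      _ = Real.sqrt ((n : ℝ) * (1/4)) := by rw [Finset.sum_const]; norm_num [mul_comm]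
      _ = Real.sqrt n / 2 := by
          have h4 : Real.sqrt 4 = 2 := by
            rw [show (4:ℝ) = 2 ^ 2 by norm_num, Real.sqrt_sq (by norm_num)]
          rw [show ((n:ℝ)) * (1/4) = (n : ℝ) / 4 by ring,
            Real.sqrt_div (by positivity : (0:ℝ) ≤ (n:ℝ)), h4]
  have hw_decomp : toR w = R • u + (toR y0 - R • u) - toR z := by
    rw [hw, toR_sub]; abel
  have hinner : (Real.sqrt n) / 2 ≤ inner ℝ u (toR w) := by
    have h1 : (inner ℝ u (R • u) : ℝ) = R := by
      rw [real_inner_smul_right, real_inner_self_eq_norm_sq, hu_norm]; ring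
    have h2 : |(inner ℝ u (toR y0 - R • u) : ℝ)| ≤ Real.sqrt n / 2 := by
      calc |(inner ℝ u (toR y0 - R • u) : ℝ)| ≤ ‖u‖ * ‖toR y0 - R • u‖ := abs_real_inner_le_norm _ _
        _ ≤ Real.sqrt n / 2 := by rw [hu_norm, one_mul]; exact hround
    have h3 : |(inner ℝ u (toR z) : ℝ)| ≤ k := by
      calc |(inner ℝ u (toR z) : ℝ)| ≤ ‖u‖ * ‖toR z‖ := abs_real_inner_le_norm _ _
        _ ≤ k := by rw [hu_norm, one_mul]; exact hz_norm
    have h4 : (inner ℝ u (toR w) : ℝ)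
        = inner ℝ u (R • u) + inner ℝ u (toR y0 - R • u) - inner ℝ u (toR z) := by
      rw [hw_decomp, inner_sub_right, inner_add_right]
    rw [h4, h1, hR]
    have := abs_le.1 h2
    have := abs_le.1 h3
    linarith
  refine ⟨w, hz1, ?_, ?_⟩
  · intro hmem
    have : (inner ℝ u (toR w) : ℝ) = 0 := by
      rw [real_inner_comm]
      exact (Submodule.mem_orthogonal V u).1 huV _ hmem
    rw [this] at hinner
    linarith
  · have hstep : ‖toR w‖ ≤ ‖R • u‖ + ‖toR y0 - R • u‖ + ‖toR z‖ := by
      rw [hw_decomp]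
      exact (norm_sub_le _ _).trans (add_le_add_left (norm_add_le _ _) _)
    calc ‖toR w‖ ≤ ‖R • u‖ + ‖toR y0 - R • u‖ + ‖toR z‖ := hstep
      _ ≤ 2 * k + (3/2) * Real.sqrt n := by
        have hRnn : 0 ≤ R := by rw [hR]; linarith
        have : ‖R • u‖ = R := by rw [norm_smul, Real.norm_eq_abs, abs_of_nonneg hRnn, hu_norm]; ring
        rw [this, hR]
        linarith

lemma candidate_one (N : AddSubgroup (Fin 1 → ℤ)) (k : ℝ)
    (hdiam : ∀ y : Fin 1 → ℤ, ∃ z : Fin 1 → ℤ, y - z ∈ N ∧ ((∑ i, |z i| : ℤ) : ℝ) ≤ k) :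
    ∃ w : Fin 1 → ℤ, w ∈ N ∧ w ≠ 0 ∧ ‖toR w‖ ≤ 2 * k + 1 := by
  obtain ⟨z, hz1, hz2⟩ := hdiam (fun _ => ⌊k⌋ + 1)
  have hz2' : ((|z 0| : ℤ) : ℝ) ≤ k := by
    calc ((|z 0| : ℤ) : ℝ) = ((∑ i, |z i| : ℤ) : ℝ) := by norm_num
      _ ≤ k := hz2
  have hz0 : |z 0| ≤ ⌊k⌋ := Int.le_floor.2 (by exact_mod_cast hz2')
  set w : Fin 1 → ℤ := (fun _ => ⌊k⌋ + 1) - z with hw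
  have hw0 : w 0 = ⌊k⌋ + 1 - z 0 := rfl
  have hw0_pos : 0 < w 0 := by
    have := (abs_le.1 hz0).2
    omega
  refine ⟨w, hz1, ?_, ?_⟩
  · intro h
    have : w 0 = 0 := congrFun h 0
    omega
  · have hnorm : ‖toR w‖ = |(w 0 : ℝ)| := by
      rw [EuclideanSpace.norm_eq]
      rw [show ∑ j, ‖toR w j‖ ^ 2 = ((w 0 : ℝ)) ^ 2 by simp [toR, sq_abs]]
      exact Real.sqrt_sq_eq_abs _
    rw [hnorm]
    have h1 : w 0 ≤ 2 * ⌊k⌋ + 1 := by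
      have := (abs_le.1 hz0).1
      omega
    have h2 : |(w 0 : ℝ)| = (w 0 : ℝ) := abs_of_pos (by exact_mod_cast hw0_pos)
    rw [h2]
    have h3 : ((w 0 : ℤ) : ℝ) ≤ ((2 * ⌊k⌋ + 1 : ℤ) : ℝ) := by exact_mod_cast h1
    have h4 : ((⌊k⌋ : ℤ) : ℝ) ≤ k := Int.floor_le k
    push_cast at h3
    linarith


lemma one_le_Dc : ∀ m, (1:ℝ) ≤ Dc m
  | 0 => le_of_eq rfl.symm
  | 1 => le_of_eq rfl.symm
  | (n + 2) => by
    have ih := one_le_Dc (n + 1)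
    show (1:ℝ) ≤ (Dc (n + 1)) ^ 2 * (4 * ((n + 2 : ℕ) : ℝ) ^ 2 * (Dc (n + 1)) ^ 3) ^ (n + 2)
    have h2 : (2:ℝ) ≤ ((n + 2 : ℕ) : ℝ) := by push_cast; linarith
    have hb : (1:ℝ) ≤ 4 * ((n + 2 : ℕ) : ℝ) ^ 2 * (Dc (n + 1)) ^ 3 := by
      have hc : (4:ℝ) ≤ ((n + 2 : ℕ) : ℝ) ^ 2 := by nlinarith
      have hd : (1:ℝ) ≤ (Dc (n + 1)) ^ 3 := one_le_pow₀ ih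
      nlinarith [mul_le_mul hc hd (by norm_num : (0:ℝ) ≤ 1) (by positivity)]
    have := one_le_pow₀ (n := n + 2) hb
    nlinarith [one_le_pow₀ (n := 2) ih]

lemma Dc_ge (m : ℕ) : 2 * (3/2:ℝ) ^ (m + 1) ≤ Dc (m + 2) := by
  have ih := one_le_Dc (m + 1)
  have h2 : (2:ℝ) ≤ ((m + 2 : ℕ) : ℝ) := by push_cast; linarith
  have h16 : (16:ℝ) ≤ 4 * ((m + 2 : ℕ) : ℝ) ^ 2 * (Dc (m + 1)) ^ 3 := by
    have hc : (4:ℝ) ≤ ((m + 2 : ℕ) : ℝ) ^ 2 := by nlinarith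
    have hd : (1:ℝ) ≤ (Dc (m + 1)) ^ 3 := one_le_pow₀ ih
    nlinarith [mul_le_mul hc hd (by norm_num : (0:ℝ) ≤ 1) (by positivity)]
  show 2 * (3/2:ℝ) ^ (m + 1) ≤ (Dc (m + 1)) ^ 2 * (4 * ((m + 2 : ℕ) : ℝ) ^ 2 * (Dc (m + 1)) ^ 3) ^ (m + 2)
  calc 2 * (3/2:ℝ) ^ (m + 1) ≤ 2 * 2 ^ (m + 1) := by
        have := pow_le_pow_left₀ (by norm_num : (0:ℝ) ≤ 3/2) (by norm_num : (3/2:ℝ) ≤ 2) (m + 1)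
        linarith
    _ = 2 ^ (m + 2) := by ring
    _ ≤ 16 ^ (m + 2) := pow_le_pow_left₀ (by norm_num) (by norm_num) _
    _ ≤ (4 * ((m + 2 : ℕ) : ℝ) ^ 2 * (Dc (m + 1)) ^ 3) ^ (m + 2) :=
        pow_le_pow_left₀ (by norm_num) h16 _
    _ ≤ (Dc (m + 1)) ^ 2 * (4 * ((m + 2 : ℕ) : ℝ) ^ 2 * (Dc (m + 1)) ^ 3) ^ (m + 2) := by
        have hpos : (0:ℝ) ≤ (4 * ((m + 2 : ℕ) : ℝ) ^ 2 * (Dc (m + 1)) ^ 3) ^ (m + 2) :=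
          pow_nonneg (by nlinarith) _
        nlinarith [one_le_pow₀ (n := 2) ih]

lemma sum_filter_lt_fin {n : ℕ} (i : Fin n) (f : ℕ → ℝ) :
    ∑ j ∈ Finset.univ.filter (fun j : Fin n => j < i), f (j : ℕ)
      = ∑ t ∈ Finset.range (i : ℕ), f t := by
  classical
  rw [Finset.sum_filter]
  have h1 : ∀ j : Fin n, (if j < i then f (j : ℕ) else 0)
      = (fun t => if t < (i : ℕ) then f t else 0) (j : ℕ) := by
    intro j
    by_cases h : j < i
    · rw [if_pos h]; simp only []; rw [if_pos (Fin.lt_def.1 h)]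
    · rw [if_neg h]; simp only []; rw [if_neg (fun hc => h (Fin.lt_def.2 hc))]
  rw [Finset.sum_congr rfl (fun j _ => h1 j)]
  rw [Fin.sum_univ_eq_sum_range (fun t => if t < (i : ℕ) then f t else 0) n]
  rw [← Finset.sum_filter]
  congr 1
  ext t
  simp only [Finset.mem_filter, Finset.mem_range]
  constructor
  · rintro ⟨_, ht⟩; exact ht
  · intro ht; exact ⟨lt_trans ht i.isLt, ht⟩

lemma geom_bound (m : ℕ) : ∑ t ∈ Finset.range m, (3/2:ℝ) ^ t = 2 * ((3/2:ℝ) ^ m - 1) := by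
  rw [geom_sum_eq (by norm_num : (3/2:ℝ) ≠ 1)]
  ring

lemma sum_image_le' {α β : Type*} [DecidableEq β] (s : Finset α) (f : α → β) (g : β → ℝ)
    (hg : ∀ b, 0 ≤ g b) : ∑ b ∈ s.image f, g b ≤ ∑ a ∈ s, g (f a) := by
  classical
  induction s using Finset.induction with
  | empty => simp
  | @insert a s ha ih =>
    rw [Finset.image_insert, Finset.sum_insert ha]
    by_cases h : f a ∈ s.image f
    · rw [Finset.insert_eq_self.2 h]
      linarith [hg (f a)]
    · rw [Finset.sum_insert h]
      linarith


lemma candidate_one' {n : ℕ} (hn1 : n = 1) (N : AddSubgroup (Fin n → ℤ)) (k : ℝ)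
    (hdiam : ∀ y : Fin n → ℤ, ∃ z : Fin n → ℤ, y - z ∈ N ∧ ((∑ i, |z i| : ℤ) : ℝ) ≤ k) :
    ∃ w : Fin n → ℤ, w ∈ N ∧ w ≠ 0 ∧ ‖toR w‖ ≤ 2 * k + 1 := by
  subst hn1
  exact candidate_one N k hdiam

lemma spanCondPrev {n : ℕ} (N : AddSubgroup (Fin n → ℤ)) (x : Fin n → (Fin n → ℤ))
    (hx : IsMinGenTuple N x) (i : Fin n) :
    {v : Fin n → ℤ | v ∈ N ∧ toR v ∈ Submodule.span ℝ (toR '' (x '' {j | j < i}))}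
      = (AddSubgroup.closure (x '' {j | j < i}) : Set (Fin n → ℤ)) := by
  obtain ⟨iv, hiv⟩ := i
  cases iv with
  | zero =>
    have hempty : {j : Fin n | j < ⟨0, hiv⟩} = ∅ := by
      ext j
      simp only [Set.mem_setOf_eq, Set.mem_empty_iff_false, iff_false]
      intro hj
      simp only [Fin.lt_def] at hj
      omega
    rw [hempty, Set.image_empty, Set.image_empty, Submodule.span_empty,
      AddSubgroup.closure_empty]
    ext v
    simp only [Set.mem_setOf_eq, Submodule.mem_bot, AddSubgroup.coe_bot,
      Set.mem_singleton_iff]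
    constructor
    · rintro ⟨_, hv⟩
      exact toR_inj (hv.trans toR_zero.symm)
    · rintro rfl
      exact ⟨N.zero_mem, toR_zero⟩
  | succ m =>
    have hm : m < n := by omega
    have hset : {j : Fin n | j < ⟨m + 1, hiv⟩} = {j : Fin n | j ≤ ⟨m, hm⟩} := by
      ext j
      simp only [Set.mem_setOf_eq, Fin.lt_def, Fin.le_def]
      omega
    rw [hset]
    exact (hx ⟨m, hm⟩).2.2.1

/-- Let `N ≤ ℤⁿ` be of finite index such that every coset of `N` in `ℤⁿ`
contains a vector of ℓ¹-norm at most `k`, and let `(x₁,…,xₙ)` be a minimal generating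
tuple of `N`.  Then `‖xᵢ‖ ≤ Dₙ·(2k + √n)` for every `i`, in the Euclidean norm. -/
theorem stmt6 (n : ℕ) (N : AddSubgroup (Fin n → ℤ)) (hN : N.FiniteIndex) (k : ℝ)
    (hdiam : ∀ y : Fin n → ℤ, ∃ z : Fin n → ℤ, y - z ∈ N ∧ ((∑ i, |z i| : ℤ) : ℝ) ≤ k)
    (x : Fin n → (Fin n → ℤ)) (hx : IsMinGenTuple N x) :
    ∀ i : Fin n, ‖toR (x i)‖ ≤ Dc n * (2 * k + Real.sqrt n) := by
  classical
  have hk : 0 ≤ k := by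
    obtain ⟨z, _, hz2⟩ := hdiam 0
    have h0 : (0:ℝ) ≤ ((∑ i, |z i| : ℤ) : ℝ) := by positivity
    linarith
  intro i
  have hn : 0 < n := i.pos
  have hsq : 0 ≤ Real.sqrt n := Real.sqrt_nonneg _
  set Cc : ℝ := if n = 1 then 2 * k + 1 else 2 * k + (3/2) * Real.sqrt n with hCc
  have hCc0 : 0 ≤ Cc := by rw [hCc]; split <;> linarith
  have key : ∀ m : ℕ, ∀ i : Fin n, (i : ℕ) < m → ‖toR (x i)‖ ≤ (3/2) ^ (i : ℕ) * Cc := by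
    intro m
    induction m with
    | zero => intro i h; omega
    | succ m ih =>
      intro i hi
      have IH : ∀ j : Fin n, j < i → ‖toR (x j)‖ ≤ (3/2) ^ (j : ℕ) * Cc := by
        intro j hj
        exact ih j (by have := Fin.lt_def.1 hj; omega)
      set sFin : Finset (Fin n → ℤ) :=
        (Finset.univ.filter (fun j : Fin n => j < i)).image x with hsFin
      have hs_coe : (sFin : Set (Fin n → ℤ)) = x '' {j | j < i} := by
        rw [hsFin, Finset.coe_image, Finset.coe_filter]
        congr 1
        ext j; simp
      have hsN : (sFin : Set (Fin n → ℤ)) ⊆ N := by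
        rw [hs_coe]; rintro v ⟨j, _, rfl⟩; exact (hx j).1
      have hprev : {v : Fin n → ℤ | v ∈ N ∧
            toR v ∈ Submodule.span ℝ (toR '' (sFin : Set (Fin n → ℤ)))}
          = (AddSubgroup.closure (sFin : Set (Fin n → ℤ)) : Set (Fin n → ℤ)) := by
        rw [hs_coe]; exact spanCondPrev N x hx i
      have hcand : ∃ w : Fin n → ℤ, w ∈ N ∧
          toR w ∉ Submodule.span ℝ (toR '' (sFin : Set (Fin n → ℤ))) ∧ ‖toR w‖ ≤ Cc := by
        by_cases h1 : n = 1
        · obtain ⟨w, hwN, hwne, hwnorm⟩ := candidate_one' h1 N k hdiam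
          refine ⟨w, hwN, ?_, ?_⟩
          · have hempty : (sFin : Set (Fin n → ℤ)) = ∅ := by
              rw [hs_coe]
              have hemp : {j : Fin n | j < i} = ∅ := by
                ext j
                simp only [Set.mem_setOf_eq, Set.mem_empty_iff_false, iff_false]
                intro hj
                have := Fin.lt_def.1 hj
                omega
              rw [hemp, Set.image_empty]
            rw [hempty, Set.image_empty, Submodule.span_empty, Submodule.mem_bot]
            intro h; exact hwne (toR_inj (h.trans toR_zero.symm))
          · rw [hCc, if_pos h1]; exact hwnorm
        · haveI : FiniteDimensional ℝ
              (Submodule.span ℝ (toR '' (sFin : Set (Fin n → ℤ)))) :=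
            FiniteDimensional.span_of_finite ℝ ((sFin : Set (Fin n → ℤ)).toFinite.image toR)
          have hcardlt : (Finset.univ.filter (fun j : Fin n => j < i)).card < n := by
            by_contra hcon
            push_neg at hcon
            have hle : (Finset.univ.filter (fun j : Fin n => j < i)).card ≤ n := by
              have := Finset.card_le_univ (Finset.univ.filter (fun j : Fin n => j < i))
              simpa using this
            have hequ : (Finset.univ.filter (fun j : Fin n => j < i)) = Finset.univ := by
              apply Finset.eq_univ_of_card
              simp only [Fintype.card_fin]
              omega
            have : i ∈ Finset.univ.filter (fun j : Fin n => j < i) := by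
              rw [hequ]; exact Finset.mem_univ i
            exact absurd (Finset.mem_filter.1 this).2 (lt_irrefl i)
          have hVne : Submodule.span ℝ (toR '' (sFin : Set (Fin n → ℤ))) ≠ ⊤ := by
            intro htop
            have himg : toR '' (sFin : Set (Fin n → ℤ)) = ((sFin.image toR : Finset _) : Set _) :=
              Finset.coe_image.symm
            have hfr : Module.finrank ℝ
                (Submodule.span ℝ (toR '' (sFin : Set (Fin n → ℤ)))) ≤ sFin.card := by
              rw [himg]
              exact (finrank_span_finset_le_card (sFin.image toR)).trans
                (Finset.card_image_le)
            rw [htop, finrank_top, finrank_euclideanSpace_fin] at hfr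
            have := (Finset.card_image_le (s := Finset.univ.filter (fun j : Fin n => j < i)) (f := x))
            rw [hsFin] at hfr
            omega
          obtain ⟨w, hwN, hwV, hwn⟩ := candidate_gen hn N k hk hdiam _ hVne
          refine ⟨w, hwN, hwV, ?_⟩
          rw [hCc, if_neg h1]
          exact hwn
      obtain ⟨w, hwN, hwV, hwn⟩ := hcand
      obtain ⟨y, hyN, hyclos, hySpan, hynorm⟩ := saturation N sFin hsN hprev w hwN hwV
      rw [hs_coe] at hyclos hySpan
      have hmin := (hx i).2.2.2 y hyN hyclos hySpan
      have hsum : ∑ v ∈ sFin, ‖toR v‖ ≤ 2 * ((3/2:ℝ) ^ (i : ℕ) - 1) * Cc := by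
        calc ∑ v ∈ sFin, ‖toR v‖
            ≤ ∑ j ∈ Finset.univ.filter (fun j : Fin n => j < i), ‖toR (x j)‖ :=
              sum_image_le' _ _ _ (fun b => norm_nonneg _)
          _ ≤ ∑ j ∈ Finset.univ.filter (fun j : Fin n => j < i), (3/2:ℝ) ^ (j : ℕ) * Cc := by
              apply Finset.sum_le_sum
              intro j hj
              exact IH j (Finset.mem_filter.1 hj).2
          _ = ∑ t ∈ Finset.range (i : ℕ), (3/2:ℝ) ^ t * Cc :=
              sum_filter_lt_fin i (fun t => (3/2:ℝ) ^ t * Cc)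
          _ = (∑ t ∈ Finset.range (i : ℕ), (3/2:ℝ) ^ t) * Cc := by
              rw [Finset.sum_mul]
          _ = 2 * ((3/2:ℝ) ^ (i : ℕ) - 1) * Cc := by rw [geom_bound]
      calc ‖toR (x i)‖ ≤ ‖toR y‖ := hmin
        _ ≤ ‖toR w‖ + (1/2) * ∑ v ∈ sFin, ‖toR v‖ := hynorm
        _ ≤ Cc + (1/2) * (2 * ((3/2:ℝ) ^ (i : ℕ) - 1) * Cc) := by
            have h2 : (1/2:ℝ) * ∑ v ∈ sFin, ‖toR v‖
                ≤ (1/2) * (2 * ((3/2:ℝ) ^ (i : ℕ) - 1) * Cc) :=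
              mul_le_mul_of_nonneg_left hsum (by norm_num)
            linarith
        _ = (3/2) ^ (i : ℕ) * Cc := by ring
  have hkey := key ((i : ℕ) + 1) i (by omega)
  by_cases h1 : n = 1
  · have hi0 : (i : ℕ) = 0 := by omega
    have hc : Cc = 2 * k + 1 := by rw [hCc, if_pos h1]
    have hDc1 : Dc n = 1 := by rw [h1]; rfl
    have hs1 : Real.sqrt (n : ℝ) = 1 := by rw [h1]; simp
    rw [hi0] at hkey
    rw [hDc1, hs1, one_mul]
    rw [hc] at hkey
    simpa using hkey
  · obtain ⟨m, rfl⟩ : ∃ m, n = m + 2 := ⟨n - 2, by omega⟩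
    have hc : Cc = 2 * k + (3/2) * Real.sqrt ((m + 2 : ℕ) : ℝ) := by rw [hCc, if_neg h1]
    have hpow : (3/2:ℝ) ^ (i : ℕ) ≤ (3/2:ℝ) ^ (m + 1) :=
      pow_le_pow_right₀ (by norm_num) (by omega : (i : ℕ) ≤ m + 1)
    have hbase : 0 ≤ 2 * k + Real.sqrt ((m + 2 : ℕ) : ℝ) := by
      have := Real.sqrt_nonneg ((m + 2 : ℕ) : ℝ); linarith
    have hCle : Cc ≤ 2 * (2 * k + Real.sqrt ((m + 2 : ℕ) : ℝ)) := by
      rw [hc]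
      have := Real.sqrt_nonneg ((m + 2 : ℕ) : ℝ)
      linarith
    calc ‖toR (x i)‖ ≤ (3/2) ^ (i : ℕ) * Cc := hkey
      _ ≤ (3/2) ^ (m + 1) * (2 * (2 * k + Real.sqrt ((m + 2 : ℕ) : ℝ))) :=
          mul_le_mul hpow hCle hCc0 (by positivity)
      _ = (2 * (3/2) ^ (m + 1)) * (2 * k + Real.sqrt ((m + 2 : ℕ) : ℝ)) := by ring
      _ ≤ Dc (m + 2) * (2 * k + Real.sqrt ((m + 2 : ℕ) : ℝ)) :=
          mul_le_mul_of_nonneg_right (Dc_ge m) hbase
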